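/- Let f : X → ℝ be Fréchet differentiable and uniformly convex with modulus δ, i.e., f(λx + (1−λ)y) ≤ λf(x) + (1−λ)f(y) − λ(1−λ)δ(‖x−y‖) for all λ ∈ (0,1) and x, y ∈ X. Then f(x) ≥ f(y) + ⟨f'(y), x − y⟩ + δ(‖x − y‖) for all x, y ∈ X. -/

import Mathlib

/-- **Subgradient inequality for uniformly convex functions.** If `f` is Fréchet
differentiable and uniformly convex with modulus `δ`, i.e.
`f(λx + (1−λ)y) ≤ λ f(x) + (1−λ) f(y) − λ(1−λ) δ(‖x−y‖)` for all `λ ∈ (0,1)` and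
`x, y`, then `f(x) ≥ f(y) + ⟨f'(y), x − y⟩ + δ(‖x − y‖)` for all `x, y`. -/
theorem stmt_9
    {X : Type*} [NormedAddCommGroup X] [NormedSpace ℝ X] [CompleteSpace X]
    (f : X → ℝ) (f' : X → X →L[ℝ] ℝ)
    (hfderiv : ∀ x : X, HasFDerivAt f (f' x) x)
    (δ : ℝ → ℝ)
    (hδcont : ContinuousOn δ (Set.Ici 0)) (hδ0 : δ 0 = 0)
    (hδpos : ∀ t > (0 : ℝ), 0 < δ t) (hδnonneg : ∀ t ≥ (0 : ℝ), 0 ≤ δ t)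
    (hfUnifConv : ∀ x y : X, ∀ lam : ℝ, 0 < lam → lam < 1 →
      f (lam • x + (1 - lam) • y) ≤
        lam * f x + (1 - lam) * f y - lam * (1 - lam) * δ ‖x - y‖) :
    ∀ x y : X, f y + f' y (x - y) + δ ‖x - y‖ ≤ f x := by
  intro x y
  set v := x - y with hv
  set g : ℝ → ℝ := fun t => f (y + t • v) with hg
  have hc : ∀ t : ℝ, HasDerivAt (fun t : ℝ => y + t • v) v t := by
    intro t
    simpa using ((hasDerivAt_id t).smul_const v).const_add y
  have hgd : HasDerivAt g (f' y v) 0 := by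
    have := (hfderiv (y + (0 : ℝ) • v)).comp_hasDerivAt 0 (hc 0)
    simp only [zero_smul, add_zero] at this
    exact this
  have hslope : Filter.Tendsto (fun t : ℝ => (g t - g 0) / t)
      (nhdsWithin 0 (Set.Ioi 0)) (nhds (f' y v)) := by
    have h := hasDerivAt_iff_tendsto_slope.mp hgd
    have h2 := h.mono_left (nhdsWithin_mono 0 (fun t ht =>
      Set.mem_compl_singleton_iff.mpr (ne_of_gt ht)))
    refine h2.congr fun t => ?_
    simp [slope_def_field]
  have hrhs : Filter.Tendsto (fun t : ℝ => f x - f y - (1 - t) * δ ‖v‖)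
      (nhdsWithin 0 (Set.Ioi 0)) (nhds (f x - f y - δ ‖v‖)) := by
    have hcont : Continuous (fun t : ℝ => f x - f y - (1 - t) * δ ‖v‖) := by
      continuity
    have := (hcont.tendsto 0).mono_left (nhdsWithin_le_nhds (s := Set.Ioi (0:ℝ)))
    simpa using this
  have hev : ∀ᶠ t in nhdsWithin (0:ℝ) (Set.Ioi 0),
      (g t - g 0) / t ≤ f x - f y - (1 - t) * δ ‖v‖ := by
    filter_upwards [Ioo_mem_nhdsGT_of_mem (by norm_num : (0:ℝ) ∈ Set.Ico (0:ℝ) 1)]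
      with t ht
    obtain ⟨ht0, ht1⟩ := ht
    have hconv := hfUnifConv x y t ht0 ht1
    have heq : t • x + (1 - t) • y = y + t • v := by
      rw [hv]; module
    have hg0 : g 0 = f y := by simp [hg]
    have hgt : g t ≤ t * f x + (1 - t) * f y - t * (1 - t) * δ ‖v‖ := by
      rw [hg]; rw [heq] at hconv; simpa [hv] using hconv
    rw [div_le_iff₀ ht0, hg0]
    nlinarith [hgt]
  have key : f' y v ≤ f x - f y - δ ‖v‖ :=
    le_of_tendsto_of_tendsto hslope hrhs hev
  linarith [key]
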